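/- Let O ⊆ R be an order in a Dedekind domain such that the extension O ⊆ R of monoids of nonzero elements is a root extension (for every a ∈ R there is n ∈ ℕ with a^n ∈ O), and suppose O is transfer Krull via an overmonoid H with O^• ⊆ H ⊆ q(O^•) such that the inclusion O^• ↪ H is a transfer homomorphism and H is Krull. Then R^• ⊆ H and every atom of O^• is an atom of R^•. -/

import Mathlib

open scoped nonZeroDivisors

section MonoidDefs
variable {H B : Type*} [CommMonoid H] [CommMonoid B]

/-- The set of lengths of `a`: `{0}` for units, otherwise the set of `k` such that
`a` is a product of `k` atoms (irreducible elements). -/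
def lengthsSet (a : H) : Set ℕ :=
  {k | (IsUnit a ∧ k = 0) ∨
    (¬ IsUnit a ∧ ∃ l : Multiset H, Multiset.card l = k ∧ (∀ x ∈ l, Irreducible x) ∧ l.prod = a)}

/-- A transfer homomorphism: (T1) `B = θ(H)·B^×` and `θ⁻¹(B^×) = H^×`;
(T2) factorizations of `θ u` lift to factorizations of `u` up to associates. -/
def IsTransferHom (θ : H →* B) : Prop :=
  (∀ b : B, ∃ u : H, ∃ ε : Bˣ, b = θ u * ε) ∧
  (∀ u : H, IsUnit (θ u) → IsUnit u) ∧
  (∀ u : H, ∀ b c : B, θ u = b * c →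
    ∃ v w : H, u = v * w ∧ Associated (θ v) b ∧ Associated (θ w) c)

/-- A Krull monoid: a monoid admitting a divisor homomorphism into a
free abelian monoid. -/
def IsKrullMonoid (H : Type*) [CommMonoid H] : Prop :=
  ∃ (ι : Type) (d : H →* Multiplicative (ι →₀ ℕ)), ∀ a b : H, d a ∣ d b → a ∣ b

/-- Half-factorial: all factorizations of an element into atoms have the same length. -/
def IsHalfFactorial (A : Type*) [CommMonoid A] : Prop :=
  ∀ (a : A) (l m : Multiset A), (∀ x ∈ l, Irreducible x) → (∀ x ∈ m, Irreducible x) →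
    l.prod = a → m.prod = a → Multiset.card l = Multiset.card m

/-- An absolutely irreducible element: an atom all of whose powers factor uniquely
into atoms, up to associates. -/
def AbsolutelyIrreducible (a : H) : Prop :=
  Irreducible a ∧ ∀ n : ℕ, 0 < n → ∀ l m : Multiset H,
    (∀ x ∈ l, Irreducible x) → (∀ x ∈ m, Irreducible x) →
    l.prod = a ^ n → m.prod = a ^ n → Multiset.Rel Associated l m

end MonoidDefs

section RingDefs
variable {R : Type*} [CommRing R]

/-- The conductor of a subring `O ⊆ R`: the largest ideal of `R` contained in `O`. -/
def Subring.conductor (O : Subring R) : Ideal R where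
  carrier := {x | ∀ r : R, x * r ∈ O}
  add_mem' := by
    intro a b ha hb r
    have h : (a + b) * r = a * r + b * r := by ring
    rw [h]; exact O.add_mem (ha r) (hb r)
  zero_mem' := by intro r; simpa using O.zero_mem
  smul_mem' := by
    intro c x hx r
    have h : c • x * r = x * (c * r) := by simp [smul_eq_mul]; ring
    rw [h]; exact hx (c * r)

/-- `a` is a regular element modulo the ideal `f`. -/
def RegF (f : Ideal R) (a : R) : Prop := IsUnit (Ideal.Quotient.mk f a)

end RingDefs

section TK
variable {K : Type*} [CommRing K]

/-- `x` and `y` are associated within the submonoid `H` of `K`. -/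
def AssocIn (H : Submonoid K) (x y : K) : Prop :=
  ∃ ε ∈ H, (∃ ε' ∈ H, ε * ε' = 1) ∧ x = y * ε

end TK

variable {R₀ : Type*}

/-- `H` is a Krull overmonoid of `O^∙` inside the quotient field of `O` (which is the
quotient field of `R`), with `O^∙ ⊆ H ⊆ q(O^∙)`, such that the inclusion `O^∙ ↪ H`
is a transfer homomorphism; this witnesses that `O` is transfer Krull. -/
structure IsTKOvermonoid {R : Type*} [CommRing R] [IsDomain R] [IsDedekindDomain R]
    (O : Subring R) (H : Submonoid (FractionRing R)) : Prop where
  nonzero : ∀ x ∈ H, x ≠ 0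
  incl : ∀ a : R, a ∈ O → a ≠ 0 → algebraMap R (FractionRing R) a ∈ H
  inQuot : ∀ x ∈ H, ∃ a b : R, a ∈ O ∧ b ∈ O ∧ a ≠ 0 ∧ b ≠ 0 ∧
    x * algebraMap R (FractionRing R) b = algebraMap R (FractionRing R) a
  krull : IsKrullMonoid ↥H
  t1 : ∀ x ∈ H, ∃ a : R, a ∈ O ∧ a ≠ 0 ∧ ∃ ε ∈ H, (∃ ε' ∈ H, ε * ε' = 1) ∧
    x = algebraMap R (FractionRing R) a * ε
  t1' : ∀ a : R, a ∈ O → a ≠ 0 →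
    (∃ y ∈ H, algebraMap R (FractionRing R) a * y = 1) → ∃ b ∈ O, a * b = 1
  t2 : ∀ a : R, a ∈ O → a ≠ 0 → ∀ x ∈ H, ∀ y ∈ H,
    algebraMap R (FractionRing R) a = x * y →
    ∃ v w : R, v ∈ O ∧ w ∈ O ∧ a = v * w ∧
      AssocIn H (algebraMap R (FractionRing R) v) x ∧
      AssocIn H (algebraMap R (FractionRing R) w) y

/-- In the free abelian monoid, `u ^ n ∣ v ^ n` implies `u ∣ v` (for `n > 0`). -/
lemma pow_dvd_pow_free {ι : Type} {u v : Multiplicative (ι →₀ ℕ)} {n : ℕ} (hn : 0 < n)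
    (h : u ^ n ∣ v ^ n) : u ∣ v := by
  obtain ⟨c, hc⟩ := h
  have hle : u.toAdd ≤ v.toAdd := by
    have key : n • v.toAdd = n • u.toAdd + c.toAdd := by
      have := congrArg Multiplicative.toAdd hc
      simpa [toAdd_pow, toAdd_mul] using this
    rw [Finsupp.le_def]
    intro i
    have hi : n • v.toAdd i = n • u.toAdd i + c.toAdd i := by
      have := congrArg (fun f : ι →₀ ℕ => f i) key
      simpa [Finsupp.smul_apply, Finsupp.add_apply] using this
    have : n * u.toAdd i ≤ n * v.toAdd i := by
      simp only [smul_eq_mul] at hi; omega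
    exact Nat.le_of_mul_le_mul_left this hn
  refine ⟨Multiplicative.ofAdd (v.toAdd - u.toAdd), ?_⟩
  have : u.toAdd + (v.toAdd - u.toAdd) = v.toAdd := add_tsub_cancel_of_le hle
  apply Multiplicative.toAdd.injective
  simpa [toAdd_mul] using this.symm

theorem root_extension_atoms {R : Type*} [CommRing R] [IsDomain R] [IsDedekindDomain R]
    (O : Subring R) (hne : O ≠ ⊤) (hfg : Module.Finite ↥O R)
    (hfrac : ∀ r : R, ∃ a b : ↥O, (b : R) ≠ 0 ∧ (b : R) * r = (a : R))
    (hroot : ∀ a : R, ∃ n : ℕ, 0 < n ∧ a ^ n ∈ O)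
    (H : Submonoid (FractionRing R)) (hH : IsTKOvermonoid O H) :
    (∀ r : R, r ≠ 0 → algebraMap R (FractionRing R) r ∈ H) ∧
    (∀ a : ↥O, Irreducible a → Irreducible ((a : R))) := by
  set φ := algebraMap R (FractionRing R) with hφ
  have hinj : Function.Injective φ := IsFractionRing.injective R (FractionRing R)
  have hφne : ∀ {x : R}, x ≠ 0 → φ x ≠ 0 := fun hx => by
    simpa using fun h => hx (hinj (by simpa using h))
  -- Part 1: R^• ⊆ H
  have part1 : ∀ r : R, r ≠ 0 → φ r ∈ H := by
    intro r hr
    obtain ⟨n, hn, hrn⟩ := hroot r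
    obtain ⟨a, b, hb, hba⟩ := hfrac r
    have ha : (a : R) ≠ 0 := by
      rw [← hba]; exact mul_ne_zero hb hr
    have hga : φ (a : R) ∈ H := hH.incl _ a.2 ha
    have hgb : φ (b : R) ∈ H := hH.incl _ b.2 hb
    have hgp : φ (r ^ n) ∈ H := hH.incl _ hrn (pow_ne_zero _ hr)
    obtain ⟨ι, d, hd⟩ := hH.krull
    set g : ↥H := ⟨φ (a : R), hga⟩
    set h : ↥H := ⟨φ (b : R), hgb⟩
    set p : ↥H := ⟨φ (r ^ n), hgp⟩
    have hrel : g ^ n = h ^ n * p := by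
      ext
      push_cast [g, h, p]
      rw [← map_pow, ← map_pow, ← map_mul]
      congr 1
      rw [← hba, mul_pow]
    have hdvd : h ∣ g := by
      apply hd
      apply pow_dvd_pow_free hn (n := n)
      rw [← map_pow, ← map_pow]
      exact Dvd.intro (d p) (by rw [← map_mul, hrel])
    obtain ⟨k, hk⟩ := hdvd
    have hkval : φ (a : R) = φ (b : R) * (k : FractionRing R) := by
      have := congrArg (fun x : ↥H => (x : FractionRing R)) hk
      simpa [g, h] using this
    have : φ (b : R) * φ r = φ (b : R) * (k : FractionRing R) := by
      rw [← map_mul, hba, hkval]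
    have heq : φ r = (k : FractionRing R) := by
      exact mul_left_cancel₀ (hφne hb) this
    rw [heq]; exact k.2
  refine ⟨part1, ?_⟩
  -- key: if x ∈ R is nonzero and invertible "in H", then x is a unit of R
  have key : ∀ x : R, x ≠ 0 → (∃ z ∈ H, φ x * z = 1) → IsUnit x := by
    intro x hx ⟨z, hz, hxz⟩
    obtain ⟨n, hn, hxn⟩ := hroot x
    have : ∃ y ∈ H, φ (x ^ n) * y = 1 := by
      refine ⟨z ^ n, pow_mem hz n, ?_⟩
      rw [map_pow, ← mul_pow, hxz, one_pow]
    obtain ⟨b, hbO, hxb⟩ := hH.t1' (x ^ n) hxn (pow_ne_zero _ hx) this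
    refine IsUnit.of_mul_eq_one (a := x) (x ^ (n - 1) * b) ?_
    calc x * (x ^ (n - 1) * b) = x ^ (1 + (n - 1)) * b := by rw [pow_add, pow_one, mul_assoc]
    _ = 1 := by rw [show 1 + (n - 1) = n by omega, hxb]
  -- Part 2
  intro a hairr
  have ha0 : a ≠ 0 := by
    intro h
    exact hairr.not_isUnit (by rw [h] at hairr ⊢; exact (hairr.isUnit_or_isUnit
      (show (0 : ↥O) = 0 * 0 by simp)).elim id id)
  have haR : (a : R) ≠ 0 := fun h => ha0 (Subtype.ext h)
  constructor
  · -- a is not a unit of R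
    intro hu
    obtain ⟨s, hs⟩ := hu.exists_right_inv
    obtain ⟨n, hn, hsn⟩ := hroot s
    apply hairr.not_isUnit
    refine IsUnit.of_mul_eq_one (a := a) ⟨(a : R) ^ (n - 1) * s ^ n,
      O.mul_mem (O.pow_mem a.2 _) hsn⟩ (Subtype.ext ?_)
    push_cast
    calc (a : R) * ((a : R) ^ (n - 1) * s ^ n)
        = (a : R) ^ (1 + (n - 1)) * s ^ n := by rw [pow_add, pow_one, mul_assoc]
      _ = ((a : R) * s) ^ n := by rw [show 1 + (n - 1) = n by omega, mul_pow]
      _ = 1 := by rw [hs, one_pow]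
  · intro x y hxy
    have hx0 : x ≠ 0 := fun h => haR (by rw [hxy, h, zero_mul])
    have hy0 : y ≠ 0 := fun h => haR (by rw [hxy, h, mul_zero])
    have hfx : φ x ∈ H := part1 x hx0
    have hfy : φ y ∈ H := part1 y hy0
    have hfa : φ (a : R) = φ x * φ y := by rw [← map_mul, ← hxy]
    obtain ⟨v, w, hvO, hwO, hvw, ⟨ε, hεH, -, hvx⟩, ⟨δ, hδH, -, hwy⟩⟩ :=
      hH.t2 (a : R) a.2 haR (φ x) hfx (φ y) hfy hfa
    have hsplit : a = (⟨v, hvO⟩ : ↥O) * ⟨w, hwO⟩ := Subtype.ext (by push_cast; exact hvw)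
    rcases hairr.isUnit_or_isUnit hsplit with hv | hw
    · left
      obtain ⟨c, hc⟩ := hv.exists_right_inv
      have hvc : v * (c : R) = 1 := by
        have := congrArg (Subtype.val) hc; push_cast at this; exact this
      have hc0 : (c : R) ≠ 0 := fun h => by simp [h] at hvc
      refine key x hx0 ⟨ε * φ (c : R), H.mul_mem hεH (hH.incl _ c.2 hc0), ?_⟩
      calc φ x * (ε * φ (c : R)) = (φ x * ε) * φ (c : R) := by ring
      _ = φ v * φ (c : R) := by rw [← hvx]
      _ = 1 := by rw [← map_mul, hvc, map_one]
    · right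
      obtain ⟨c, hc⟩ := hw.exists_right_inv
      have hwc : w * (c : R) = 1 := by
        have := congrArg (Subtype.val) hc; push_cast at this; exact this
      have hc0 : (c : R) ≠ 0 := fun h => by simp [h] at hwc
      refine key y hy0 ⟨δ * φ (c : R), H.mul_mem hδH (hH.incl _ c.2 hc0), ?_⟩
      calc φ y * (δ * φ (c : R)) = (φ y * δ) * φ (c : R) := by ring
      _ = φ w * φ (c : R) := by rw [← hwy]
      _ = 1 := by rw [← map_mul, hwc, map_one]
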